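/- arXiv:1307.6756 — 2 statements merged into one kernel-verified Lean document; each statement's English description precedes it below -/
import Mathlib

section
/- For all p-dimensional fuzzy numbers u and v, the Hausdorff distance between their supports satisfies H([u]_0, [v]_0) ≤ D(u,v), where D is the sendograph metric. -/
open Metric Set

/-- A `p`-dimensional fuzzy number. -/
structure FuzzyNumber (p : ℕ) where
  u : EuclideanSpace ℝ (Fin p) → ℝ
  mem_Icc : ∀ x, u x ∈ Set.Icc (0:ℝ) 1

namespace FuzzyNumber

variable {p : ℕ}

/-- The α-cut of a fuzzy number. -/
def cut (u : FuzzyNumber p) (α : ℝ) : Set (EuclideanSpace ℝ (Fin p)) :=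
  if α = 0 then closure {x | 0 < u.u x} else {x | α ≤ u.u x}

/-- The defining conditions on cuts of a fuzzy number. -/
def IsFuzzyNumber (u : FuzzyNumber p) : Prop :=
  ∀ α ∈ Set.Icc (0:ℝ) 1, (u.cut α).Nonempty ∧ IsCompact (u.cut α) ∧ Convex ℝ (u.cut α)

/-- `ℝ^{p+1}` with the Euclidean metric, as the product of `ℝ^p` and `ℝ`. -/
abbrev E1 (p : ℕ) := WithLp 2 (EuclideanSpace ℝ (Fin p) × ℝ)

noncomputable def pair (x : EuclideanSpace ℝ (Fin p)) (β : ℝ) : E1 p :=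
  (WithLp.equiv 2 (EuclideanSpace ℝ (Fin p) × ℝ)).symm (x, β)

/-- The sendograph. -/
def send (u : FuzzyNumber p) : Set (E1 p) :=
  {z | ((WithLp.equiv 2 _) z).1 ∈ u.cut 0 ∧ ((WithLp.equiv 2 _) z).2 ∈ Set.Icc (0:ℝ) 1 ∧
    ((WithLp.equiv 2 _) z).2 ≤ u.u ((WithLp.equiv 2 _) z).1}

/-- The endograph. -/
def endo (u : FuzzyNumber p) : Set (E1 p) :=
  {z | ((WithLp.equiv 2 _) z).2 ∈ Set.Icc (0:ℝ) 1 ∧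
    ((WithLp.equiv 2 _) z).2 ≤ u.u ((WithLp.equiv 2 _) z).1}

/-- The sendograph metric. -/
noncomputable def D (u v : FuzzyNumber p) : ℝ := hausdorffDist u.send v.send

/-- The endograph metric. -/
noncomputable def Gamma (u v : FuzzyNumber p) : ℝ := hausdorffDist u.endo v.endo

/-- The supremum metric. -/
noncomputable def dSup (u v : FuzzyNumber p) : ℝ :=
  ⨆ α : Set.Icc (0:ℝ) 1, hausdorffDist (u.cut α) (v.cut α)

/-- The `L_q`-type metric. -/
noncomputable def dq (q : ℝ) (u v : FuzzyNumber p) : ℝ :=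
  (∫ α in (0:ℝ)..1, (hausdorffDist (u.cut α) (v.cut α)) ^ q) ^ (1/q)

end FuzzyNumber


section Proof

open FuzzyNumber

variable {p : ℕ}

lemma fst_dist_le (z w : FuzzyNumber.E1 p) : dist z.fst w.fst ≤ dist z w := by
  rw [WithLp.prod_dist_eq_of_L2]
  have h : dist z.fst w.fst = Real.sqrt (dist z.fst w.fst ^ 2) := by
    rw [Real.sqrt_sq dist_nonneg]
  rw [h]
  apply Real.sqrt_le_sqrt
  nlinarith [sq_nonneg (dist z.snd w.snd), Real.sq_sqrt (sq_nonneg (dist z.fst w.fst)),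
    Real.sqrt_sq (dist_nonneg (x := z.fst) (y := w.fst))]

lemma pair_mem_send (u : FuzzyNumber p) {x : EuclideanSpace ℝ (Fin p)} (hx : x ∈ u.cut 0) :
    FuzzyNumber.pair x 0 ∈ u.send := by
  refine ⟨hx, ⟨le_refl 0, zero_le_one⟩, (u.mem_Icc x).1⟩

lemma send_nonempty (u : FuzzyNumber p) (hu : u.IsFuzzyNumber) : u.send.Nonempty := by
  obtain ⟨x, hx⟩ := (hu 0 ⟨le_refl 0, zero_le_one⟩).1
  exact ⟨FuzzyNumber.pair x 0, pair_mem_send u hx⟩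

lemma send_bounded (u : FuzzyNumber p) (hu : u.IsFuzzyNumber) :
    Bornology.IsBounded u.send := by
  have hc : IsCompact (u.cut 0) := (hu 0 ⟨le_refl 0, zero_le_one⟩).2.1
  have hb : Bornology.IsBounded ((u.cut 0) ×ˢ Set.Icc (0:ℝ) 1) :=
    hc.isBounded.prod (isBounded_Icc 0 1)
  have : u.send ⊆ (WithLp.equiv 2 (EuclideanSpace ℝ (Fin p) × ℝ)) ⁻¹'
      ((u.cut 0) ×ˢ Set.Icc (0:ℝ) 1) := by
    rintro z ⟨h1, h2, _⟩
    exact ⟨h1, h2⟩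
  exact ((WithLp.prod_antilipschitzWith_ofLp 2 _ _).isBounded_preimage hb).subset this

theorem hausdorffDist_support_le_D' (u v : FuzzyNumber p)
    (hu : u.IsFuzzyNumber) (hv : v.IsFuzzyNumber) :
    hausdorffDist (u.cut 0) (v.cut 0) ≤ FuzzyNumber.D u v := by
  have fin : EMetric.hausdorffEdist u.send v.send ≠ ⊤ :=
    Metric.hausdorffEdist_ne_top_of_nonempty_of_bounded (send_nonempty u hu)
      (send_nonempty v hv) (send_bounded u hu) (send_bounded v hv)
  have key : ∀ (a b : FuzzyNumber p), a.IsFuzzyNumber → b.IsFuzzyNumber →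
      EMetric.hausdorffEdist a.send b.send ≠ ⊤ →
      ∀ x ∈ a.cut 0, infDist x (b.cut 0) ≤ hausdorffDist a.send b.send := by
    intro a b ha hb fin' x hx
    refine le_of_forall_pos_le_add fun ε hε => ?_
    have hlt : hausdorffDist a.send b.send < hausdorffDist a.send b.send + ε :=
      lt_add_of_pos_right _ hε
    obtain ⟨z, hz, hdz⟩ := Metric.exists_dist_lt_of_hausdorffDist_lt
      (pair_mem_send a hx) hlt fin'
    have hz1 : z.fst ∈ b.cut 0 := hz.1
    have h1 : infDist x (b.cut 0) ≤ dist x z.fst := Metric.infDist_le_dist_of_mem hz1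
    have h2 : dist x z.fst ≤ dist (FuzzyNumber.pair x 0) z :=
      fst_dist_le (FuzzyNumber.pair x 0) z
    linarith
  apply Metric.hausdorffDist_le_of_infDist Metric.hausdorffDist_nonneg
  · exact key u v hu hv fin
  · intro x hx
    rw [Metric.hausdorffDist_comm] at *
    exact key v u hv hu (by unfold EMetric.hausdorffEdist at fin ⊢; rwa [Metric.hausdorffEDist_comm] at fin) x hx

end Proof

theorem hausdorffDist_support_le_D (p : ℕ) (u v : FuzzyNumber p)
    (hu : u.IsFuzzyNumber) (hv : v.IsFuzzyNumber) :
    hausdorffDist (u.cut 0) (v.cut 0) ≤ FuzzyNumber.D u v :=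
  hausdorffDist_support_le_D' u v hu hv
end

section
/- Let u_m (m ∈ ℕ) and u be p-dimensional fuzzy numbers. If D(u_m, u) → 0 in the sendograph metric, then d_q(u_m, u) → 0 for every q ≥ 1, where d_q is the L_q-type metric. -/
open Metric Set

open Metric Set FuzzyNumber

namespace FuzzyNumber

variable {p : ℕ}

lemma mem_cut_of_pos {w : FuzzyNumber p} {a : ℝ} (ha : a ≠ 0) {x} :
    x ∈ w.cut a ↔ a ≤ w.u x := by
  simp [cut, ha]

lemma cut_mono {w : FuzzyNumber p} {a b : ℝ} (h0 : 0 < a) (hab : a ≤ b) :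
    w.cut b ⊆ w.cut a := by
  rw [cut, cut, if_neg h0.ne', if_neg (h0.trans_le hab).ne']
  exact fun x hx => le_trans hab hx

lemma cut_subset_cut_zero {w : FuzzyNumber p} {a : ℝ} (h0 : 0 < a) :
    w.cut a ⊆ w.cut 0 := by
  rw [cut, cut, if_neg h0.ne', if_pos rfl]
  exact fun x hx => subset_closure (lt_of_lt_of_le h0 hx)

lemma equiv_pair (x : EuclideanSpace ℝ (Fin p)) (β : ℝ) :
    (WithLp.equiv 2 (EuclideanSpace ℝ (Fin p) × ℝ)) (pair x β) = (x, β) :=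
  Equiv.apply_symm_apply _ _

lemma mem_send {w : FuzzyNumber p} {x : EuclideanSpace ℝ (Fin p)} {β : ℝ}
    (hx : x ∈ w.cut 0) (hβ : β ∈ Set.Icc (0:ℝ) 1) (hle : β ≤ w.u x) :
    pair x β ∈ w.send := by
  refine ⟨?_, ?_, ?_⟩ <;> rw [equiv_pair] <;> assumption

lemma dist_fst_le (z z' : E1 p) :
    dist ((WithLp.equiv 2 _) z).1 ((WithLp.equiv 2 _) z').1 ≤ dist z z' := by
  rw [WithLp.prod_dist_eq_of_L2]
  have h1 : (0:ℝ) ≤ dist z.snd z'.snd ^ 2 := sq_nonneg _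
  have := Real.sqrt_le_sqrt (le_add_of_nonneg_right h1 :
    dist z.fst z'.fst ^ 2 ≤ dist z.fst z'.fst ^ 2 + dist z.snd z'.snd ^ 2)
  rwa [Real.sqrt_sq dist_nonneg] at this

lemma dist_snd_le (z z' : E1 p) :
    dist ((WithLp.equiv 2 _) z).2 ((WithLp.equiv 2 _) z').2 ≤ dist z z' := by
  rw [WithLp.prod_dist_eq_of_L2]
  have h1 : (0:ℝ) ≤ dist z.fst z'.fst ^ 2 := sq_nonneg _
  have := Real.sqrt_le_sqrt (le_add_of_nonneg_left h1 :
    dist z.snd z'.snd ^ 2 ≤ dist z.fst z'.fst ^ 2 + dist z.snd z'.snd ^ 2)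
  rwa [Real.sqrt_sq dist_nonneg] at this

lemma cut_nonempty {w : FuzzyNumber p} (hw : w.IsFuzzyNumber) {a : ℝ}
    (ha : a ∈ Set.Icc (0:ℝ) 1) : (w.cut a).Nonempty := (hw a ha).1

lemma cut_compact {w : FuzzyNumber p} (hw : w.IsFuzzyNumber) {a : ℝ}
    (ha : a ∈ Set.Icc (0:ℝ) 1) : IsCompact (w.cut a) := (hw a ha).2.1

lemma send_nonempty {w : FuzzyNumber p} (hw : w.IsFuzzyNumber) : w.send.Nonempty := by
  obtain ⟨x, hx⟩ := cut_nonempty hw (Set.left_mem_Icc.2 zero_le_one)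
  exact ⟨pair x 0, mem_send hx ⟨le_refl _, zero_le_one⟩ (w.mem_Icc x).1⟩

lemma sqrt_sq_add_sq_le {a b : ℝ} (ha : 0 ≤ a) (hb : 0 ≤ b) :
    Real.sqrt (a ^ 2 + b ^ 2) ≤ a + b := by
  rw [show a + b = Real.sqrt ((a+b)^2) from (Real.sqrt_sq (by linarith)).symm]
  apply Real.sqrt_le_sqrt; nlinarith

lemma send_bounded {w : FuzzyNumber p} (hw : w.IsFuzzyNumber) :
    Bornology.IsBounded w.send := by
  rw [Metric.isBounded_iff]
  refine ⟨diam (w.cut 0) + 1, fun z hz z' hz' => ?_⟩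
  obtain ⟨h1, h2, -⟩ := hz
  obtain ⟨h1', h2', -⟩ := hz'
  rw [WithLp.prod_dist_eq_of_L2]
  have hc := cut_compact hw (Set.left_mem_Icc.2 zero_le_one)
  have hd1 : dist z.fst z'.fst ≤ diam (w.cut 0) := dist_le_diam_of_mem hc.isBounded h1 h1'
  have hd2 : dist z.snd z'.snd ≤ 1 := by
    have e : ((WithLp.equiv 2 (EuclideanSpace ℝ (Fin p) × ℝ)) z).2 = z.snd := rfl
    have e' : ((WithLp.equiv 2 (EuclideanSpace ℝ (Fin p) × ℝ)) z').2 = z'.snd := rfl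
    rw [Set.mem_Icc, e] at h2; rw [Set.mem_Icc, e'] at h2'
    rw [Real.dist_eq, abs_le]; constructor <;> linarith
  calc Real.sqrt (dist z.fst z'.fst ^ 2 + dist z.snd z'.snd ^ 2)
      ≤ dist z.fst z'.fst + dist z.snd z'.snd := sqrt_sq_add_sq_le dist_nonneg dist_nonneg
    _ ≤ diam (w.cut 0) + 1 := add_le_add hd1 hd2

lemma send_edist_ne_top {v w : FuzzyNumber p} (hv : v.IsFuzzyNumber) (hw : w.IsFuzzyNumber) :
    EMetric.hausdorffEdist v.send w.send ≠ ⊤ :=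
  hausdorffEdist_ne_top_of_nonempty_of_bounded (send_nonempty hv) (send_nonempty hw)
    (send_bounded hv) (send_bounded hw)

set_option maxHeartbeats 1000000 in
lemma send_approx {v w : FuzzyNumber p} (hv : v.IsFuzzyNumber) (hw : w.IsFuzzyNumber)
    {r : ℝ} (hr : D v w < r) {z : E1 p} (hz : z ∈ v.send) :
    ∃ z' ∈ w.send, dist z z' < r := by
  unfold D at hr
  exact exists_dist_lt_of_hausdorffDist_lt hz hr (send_edist_ne_top hv hw)

set_option maxHeartbeats 1000000 in
lemma send_approx' {v w : FuzzyNumber p} (hv : v.IsFuzzyNumber) (hw : w.IsFuzzyNumber)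
    {r : ℝ} (hr : D v w < r) {z : E1 p} (hz : z ∈ w.send) :
    ∃ z' ∈ v.send, dist z z' < r := by
  have hr' : D w v < r := by unfold D at hr ⊢; rwa [hausdorffDist_comm] at hr
  exact send_approx hw hv hr' hz

lemma exists_lower_cut {w : FuzzyNumber p} (hw : w.IsFuzzyNumber) {α δ : ℝ}
    (hα : α ∈ Set.Ioc (0:ℝ) 1) (hδ : 0 < δ) :
    ∃ β ∈ Set.Ioo (0:ℝ) α, w.cut β ⊆ thickening δ (w.cut α) := by
  obtain ⟨hα0, hα1⟩ := hα
  set β : ℕ → ℝ := fun n => α - α / (n + 2) with hβ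
  have hβmem : ∀ n, β n ∈ Set.Ioo (0:ℝ) α := by
    intro n
    have h2 : (0:ℝ) < (n:ℝ) + 2 := by positivity
    constructor
    · have : α / ((n:ℝ) + 2) < α / 1 := by
        apply div_lt_div_of_pos_left hα0 one_pos (by linarith)
      simp only [hβ]; rw [div_one] at this; linarith
    · simp only [hβ]; have : 0 < α / ((n:ℝ)+2) := by positivity
      linarith
  have hβtend : Filter.Tendsto β Filter.atTop (nhds α) := by
    have h1 : Filter.Tendsto (fun n : ℕ => α / (n + 2 : ℝ)) Filter.atTop (nhds 0) := by
      have := (Filter.tendsto_add_atTop_iff_nat (f := fun n : ℕ => α / (n : ℝ))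
        (l := nhds 0) 2).mpr (tendsto_const_div_atTop_nhds_zero_nat α)
      · simpa using this
    simpa using tendsto_const_nhds.sub h1
  have hInter : (⋂ n, w.cut (β n)) = w.cut α := by
    ext x
    simp only [Set.mem_iInter, mem_cut_of_pos (hβmem _).1.ne', mem_cut_of_pos hα0.ne']
    constructor
    · intro hx
      exact le_of_tendsto hβtend (Filter.Eventually.of_forall hx)
    · intro hx n; exact le_trans (hβmem n).2.le hx
  have hcpt : ∀ n, IsCompact (w.cut (β n)) := fun n =>
    cut_compact hw ⟨(hβmem n).1.le, le_trans (hβmem n).2.le hα1⟩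
  have hdir : Directed (· ⊇ ·) (fun n => w.cut (β n)) := by
    intro m n
    refine ⟨max m n, ?_, ?_⟩ <;> apply cut_mono (hβmem _).1
    · have h1 : β m ≤ β (max m n) := by
        simp only [hβ]
        have : α / ((max m n : ℕ) + 2 : ℝ) ≤ α / ((m:ℕ) + 2 : ℝ) := by
          apply div_le_div_of_nonneg_left hα0.le (by positivity)
          have : ((m:ℝ)) ≤ ((max m n : ℕ) : ℝ) := Nat.cast_le.mpr (le_max_left m n)
          linarith
        linarith
      exact h1
    · have h1 : β n ≤ β (max m n) := by
        simp only [hβ]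
        have : α / ((max m n : ℕ) + 2 : ℝ) ≤ α / ((n:ℕ) + 2 : ℝ) := by
          apply div_le_div_of_nonneg_left hα0.le (by positivity)
          have : ((n:ℝ)) ≤ ((max m n : ℕ) : ℝ) := Nat.cast_le.mpr (le_max_right m n)
          linarith
        linarith
      exact h1
  obtain ⟨n, hn⟩ := exists_subset_nhds_of_isCompact' hdir hcpt
    (fun n => (hcpt n).isClosed)
    (fun x hx => isOpen_thickening.mem_nhds
      (self_subset_thickening hδ _ (hInter ▸ hx)))
  exact ⟨β n, hβmem n, hn⟩

lemma exists_upper_cut {w : FuzzyNumber p} (hw : w.IsFuzzyNumber) {α δ : ℝ}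
    (hα : α ∈ Set.Ioo (0:ℝ) 1) (hδ : 0 < δ)
    (hreg : w.cut α ⊆ closure {x | α < w.u x}) :
    ∃ β ∈ Set.Ioc α 1, w.cut α ⊆ thickening δ (w.cut β) := by
  obtain ⟨hα0, hα1⟩ := hα
  set β : ℕ → ℝ := fun n => α + (1 - α) / (n + 2) with hβ
  have hβmem : ∀ n, β n ∈ Set.Ioc α 1 := by
    intro n
    have h2 : (0:ℝ) < (n:ℝ) + 2 := by positivity
    constructor
    · have : 0 < (1 - α) / ((n:ℝ) + 2) := by
        apply div_pos (by linarith) h2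
      simp only [hβ]; linarith
    · simp only [hβ]
      have h1 : (1 - α) / ((n:ℝ) + 2) ≤ (1 - α) / 1 := by
        apply div_le_div_of_nonneg_left (by linarith) one_pos (by linarith)
      rw [div_one] at h1; linarith
  have hcover : w.cut α ⊆ ⋃ n, thickening δ (w.cut (β n)) := by
    intro x hx
    have h1 : x ∈ thickening δ {y | α < w.u y} :=
      closure_subset_thickening hδ _ (hreg hx)
    have h2 : {y | α < w.u y} ⊆ ⋃ n, w.cut (β n) := by
      intro y hy
      have hy1 : w.u y ≤ 1 := (w.mem_Icc y).2
      have hpos : 0 < w.u y - α := by simpa using hy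
      obtain ⟨n, hn⟩ := exists_nat_ge ((1 - α) / (w.u y - α))
      refine Set.mem_iUnion.2 ⟨n, ?_⟩
      rw [mem_cut_of_pos (lt_trans hα0 (hβmem n).1).ne']
      have h3 : (1 - α) ≤ (w.u y - α) * ((n:ℝ) + 2) := by
        have := (div_le_iff₀ hpos).1 hn
        nlinarith
      have h4 : (1 - α) / ((n:ℝ) + 2) ≤ w.u y - α := by
        rw [div_le_iff₀ (by positivity)]; linarith
      simp only [hβ]; linarith
    rw [← thickening_iUnion]
    exact thickening_subset_of_subset δ h2 h1
  obtain ⟨t, ht⟩ := (cut_compact hw ⟨hα0.le, hα1.le⟩).elim_finite_subcover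
    (fun n => thickening δ (w.cut (β n))) (fun _ => isOpen_thickening) hcover
  obtain ⟨x0, hx0⟩ := cut_nonempty hw ⟨hα0.le, hα1.le⟩
  obtain ⟨i0, hi0t, -⟩ := Set.mem_iUnion₂.1 (ht hx0)
  set N := t.sup id with hN
  refine ⟨β N, hβmem N, fun x hx => ?_⟩
  obtain ⟨i, hit, hxi⟩ := Set.mem_iUnion₂.1 (ht hx)
  have hiN : (i:ℕ) ≤ N := Finset.le_sup (f := id) hit
  have hβle : β N ≤ β i := by
    simp only [hβ]
    have : (1 - α) / ((N:ℝ) + 2) ≤ (1 - α) / ((i:ℝ) + 2) := by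
      apply div_le_div_of_nonneg_left (by linarith) (by positivity)
      have : ((i:ℝ)) ≤ (N:ℝ) := Nat.cast_le.mpr hiN
      linarith
    linarith
  exact thickening_subset_of_subset δ (cut_mono (hα0.trans (hβmem N).1) hβle) hxi

set_option maxHeartbeats 1000000 in
lemma hausdorff_cut_le {v w : FuzzyNumber p} (hv : v.IsFuzzyNumber) (hw : w.IsFuzzyNumber)
    {α ε β1 β2 r : ℝ} (hα : α ∈ Set.Ioo (0:ℝ) 1) (hε : 0 < ε)
    (hβ1 : β1 ∈ Set.Ioo (0:ℝ) α) (h1 : w.cut β1 ⊆ thickening (ε/4) (w.cut α))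
    (hβ2 : β2 ∈ Set.Ioc α 1) (h2 : w.cut α ⊆ thickening (ε/4) (w.cut β2))
    (hr : 0 < r) (hr1 : r ≤ α - β1) (hr2 : r ≤ β2 - α) (hr3 : r ≤ ε/4)
    (hD : D v w < r) :
    hausdorffDist (v.cut α) (w.cut α) ≤ ε/2 := by
  obtain ⟨hα0, hα1⟩ := hα
  apply hausdorffDist_le_of_infDist (by linarith)
  · intro x hx
    have hux : α ≤ v.u x := (mem_cut_of_pos hα0.ne').1 hx
    have hz : pair x α ∈ v.send :=
      mem_send (cut_subset_cut_zero hα0 hx) ⟨hα0.le, hα1.le⟩ hux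
    obtain ⟨z', hz', hdz⟩ := send_approx hv hw hD hz
    obtain ⟨hy0, hb, hbu⟩ := hz'
    have hd1 : dist x ((WithLp.equiv 2 _) z').1 ≤ dist (pair x α) z' := by
      have := dist_fst_le (pair x α) z'
      rwa [equiv_pair] at this
    have hd2 : dist α ((WithLp.equiv 2 _) z').2 ≤ dist (pair x α) z' := by
      have := dist_snd_le (pair x α) z'
      rwa [equiv_pair] at this
    have hbgt : α - r < ((WithLp.equiv 2 _) z').2 := by
      have h := lt_of_le_of_lt hd2 hdz
      rw [Real.dist_eq, abs_lt] at h
      linarith [h.1, h.2]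
    have hy1 : ((WithLp.equiv 2 _) z').1 ∈ w.cut β1 := by
      rw [mem_cut_of_pos hβ1.1.ne']
      have : β1 < ((WithLp.equiv 2 _) z').2 := by linarith [hβ1.2]
      linarith
    obtain ⟨yc, hyc, hdyc⟩ := mem_thickening_iff.1 (h1 hy1)
    calc infDist x (w.cut α) ≤ dist x yc := infDist_le_dist_of_mem hyc
      _ ≤ dist x ((WithLp.equiv 2 _) z').1 + dist ((WithLp.equiv 2 _) z').1 yc :=
          dist_triangle _ _ _
      _ ≤ ε/2 := by have := lt_of_le_of_lt hd1 hdz; linarith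
  · intro x hx
    obtain ⟨x', hx', hdx⟩ := mem_thickening_iff.1 (h2 hx)
    have hβ2pos : (0:ℝ) < β2 := lt_trans hα0 hβ2.1
    have hux' : β2 ≤ w.u x' := (mem_cut_of_pos hβ2pos.ne').1 hx'
    have hz : pair x' β2 ∈ w.send :=
      mem_send (cut_subset_cut_zero hβ2pos hx') ⟨hβ2pos.le, hβ2.2⟩ hux'
    obtain ⟨z', hz', hdz⟩ := send_approx' hv hw hD hz
    obtain ⟨hy0, hb, hbu⟩ := hz'
    have hd1 : dist x' ((WithLp.equiv 2 _) z').1 ≤ dist (pair x' β2) z' := by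
      have := dist_fst_le (pair x' β2) z'
      rwa [equiv_pair] at this
    have hd2 : dist β2 ((WithLp.equiv 2 _) z').2 ≤ dist (pair x' β2) z' := by
      have := dist_snd_le (pair x' β2) z'
      rwa [equiv_pair] at this
    have hbgt : β2 - r < ((WithLp.equiv 2 _) z').2 := by
      have h := lt_of_le_of_lt hd2 hdz
      rw [Real.dist_eq, abs_lt] at h
      linarith [h.1, h.2]
    have hy1 : ((WithLp.equiv 2 _) z').1 ∈ v.cut α := by
      rw [mem_cut_of_pos hα0.ne']
      linarith
    calc infDist x (v.cut α) ≤ dist x ((WithLp.equiv 2 _) z').1 :=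
          infDist_le_dist_of_mem hy1
      _ ≤ dist x x' + dist x' ((WithLp.equiv 2 _) z').1 := dist_triangle _ _ _
      _ ≤ ε/2 := by have := lt_of_le_of_lt hd1 hdz; linarith

lemma finite_of_separated {s : Set ℝ} {K : Set (EuclideanSpace ℝ (Fin p))}
    (hK : IsCompact K) {x : ℝ → EuclideanSpace ℝ (Fin p)} {r : ℝ} (hr : 0 < r)
    (hxK : ∀ a ∈ s, x a ∈ K)
    (hsep : ∀ a ∈ s, ∀ b ∈ s, a ≠ b → r ≤ dist (x a) (x b)) : s.Finite := by
  obtain ⟨t, -, htf, hcov⟩ := hK.finite_cover_balls (half_pos hr)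
  have hc : ∀ a ∈ s, ∃ c ∈ t, x a ∈ ball c (r/2) := fun a ha => by
    simpa using Set.mem_iUnion₂.1 (hcov (hxK a ha))
  choose! c hct hcb using hc
  have hinj : Set.InjOn c s := by
    intro a ha b hb hab
    by_contra hne
    have h1 := hcb a ha
    have h2 := hcb b hb
    rw [hab] at h1
    rw [mem_ball] at h1 h2
    have hd : dist (x a) (x b) < r := by
      have ht := dist_triangle (x a) (c b) (x b)
      rw [dist_comm (c b) (x b)] at ht
      linarith
    exact absurd (hsep a ha b hb hne) (not_le.2 hd)
  exact Set.Finite.of_finite_image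
    (htf.subset (by rintro _ ⟨a, ha, rfl⟩; exact hct a ha)) hinj

lemma bad_countable {w : FuzzyNumber p} (hw : w.IsFuzzyNumber) :
    {α ∈ Set.Ioo (0:ℝ) 1 | ¬ w.cut α ⊆ closure {x | α < w.u x}}.Countable := by
  set B := {α ∈ Set.Ioo (0:ℝ) 1 | ¬ w.cut α ⊆ closure {x | α < w.u x}} with hB
  have hsub : B ⊆ ⋃ n : ℕ,
      {α ∈ Set.Ioo (0:ℝ) 1 | ∃ x ∈ w.cut α,
        1/((n:ℝ)+1) ≤ infDist x (closure {y | α < w.u y})} := by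
    rintro α ⟨hα, hns⟩
    obtain ⟨x, hx, hxn⟩ := Set.not_subset.1 hns
    have hSne : {y | α < w.u y}.Nonempty := by
      obtain ⟨x1, hx1⟩ := cut_nonempty hw (Set.right_mem_Icc.2 zero_le_one)
      exact ⟨x1, lt_of_lt_of_le hα.2 ((mem_cut_of_pos one_ne_zero).1 hx1)⟩
    have hpos : 0 < infDist x (closure {y | α < w.u y}) :=
      (isClosed_closure.notMem_iff_infDist_pos (hSne.mono subset_closure)).1 hxn
    obtain ⟨n, hn⟩ := exists_nat_one_div_lt hpos
    exact Set.mem_iUnion.2 ⟨n, hα, x, hx, hn.le⟩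
  refine Set.Countable.mono hsub (Set.countable_iUnion fun n => ?_)
  set Jn := {α ∈ Set.Ioo (0:ℝ) 1 | ∃ x ∈ w.cut α,
      1/((n:ℝ)+1) ≤ infDist x (closure {y | α < w.u y})} with hJn
  have hex : ∀ α ∈ Jn, ∃ x, x ∈ w.cut α ∧
      1/((n:ℝ)+1) ≤ infDist x (closure {y | α < w.u y}) := by
    rintro α ⟨-, x, hx1, hx2⟩; exact ⟨x, hx1, hx2⟩
  choose! x hx1 hx2 using hex
  have hfin : Jn.Finite := by
    refine finite_of_separated (cut_compact hw (Set.left_mem_Icc.2 zero_le_one))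
      (x := x) (r := 1/((n:ℝ)+1)) (by positivity) ?_ ?_
    · intro a ha
      exact cut_subset_cut_zero ha.1.1 (hx1 a ha)
    · intro a ha b hb hab
      rcases hab.lt_or_gt with hlt | hlt
      · have hmem : x b ∈ closure {y | a < w.u y} := by
          apply subset_closure
          have := (mem_cut_of_pos hb.1.1.ne').1 (hx1 b hb)
          exact lt_of_lt_of_le hlt this
        exact le_trans (hx2 a ha) (infDist_le_dist_of_mem hmem)
      · have hmem : x a ∈ closure {y | b < w.u y} := by
          apply subset_closure
          have := (mem_cut_of_pos ha.1.1.ne').1 (hx1 a ha)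
          exact lt_of_lt_of_le hlt this
        rw [dist_comm]
        exact le_trans (hx2 b hb) (infDist_le_dist_of_mem hmem)
  exact hfin.countable

lemma cut_edist_ne_top {v w : FuzzyNumber p} (hv : v.IsFuzzyNumber) (hw : w.IsFuzzyNumber)
    {a b : ℝ} (ha : a ∈ Set.Icc (0:ℝ) 1) (hb : b ∈ Set.Icc (0:ℝ) 1) :
    EMetric.hausdorffEdist (v.cut a) (w.cut b) ≠ ⊤ :=
  hausdorffEdist_ne_top_of_nonempty_of_bounded (cut_nonempty hv ha) (cut_nonempty hw hb)
    (cut_compact hv ha).isBounded (cut_compact hw hb).isBounded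

lemma cut_hcont {w : FuzzyNumber p} (hw : w.IsFuzzyNumber) {α : ℝ}
    (hα : α ∈ Set.Ioo (0:ℝ) 1)
    (hreg : w.cut α ⊆ closure {x | α < w.u x}) {ε : ℝ} (hε : 0 < ε) :
    ∃ η > 0, ∀ γ ∈ Set.Ioo (0:ℝ) 1, |γ - α| < η →
      hausdorffDist (w.cut γ) (w.cut α) ≤ ε := by
  obtain ⟨β1, hβ1, h1⟩ := exists_lower_cut hw ⟨hα.1, hα.2.le⟩ hε
  obtain ⟨β2, hβ2, h2⟩ := exists_upper_cut hw hα hε hreg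
  have hp1 : 0 < α - β1 := by linarith [hβ1.2]
  have hp2 : 0 < β2 - α := by linarith [hβ2.1]
  refine ⟨min (α - β1) (β2 - α), lt_min hp1 hp2, fun γ hγ hd => ?_⟩
  rw [abs_lt] at hd
  have hd1 := lt_of_lt_of_le hd.2 (min_le_left _ _)
  have hd2 := lt_of_lt_of_le hd.2 (min_le_right _ _)
  have hd1' := lt_of_le_of_lt (neg_le_neg (min_le_left (α - β1) (β2 - α))) hd.1
  have hd2' := lt_of_le_of_lt (neg_le_neg (min_le_right (α - β1) (β2 - α))) hd.1
  rcases le_total γ α with hle | hle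
  · have hsub1 : w.cut γ ⊆ w.cut β1 := cut_mono hβ1.1 (by linarith)
    have hsub2 : w.cut α ⊆ w.cut γ := cut_mono hγ.1 hle
    apply hausdorffDist_le_of_infDist hε.le
    · intro x hx
      obtain ⟨z, hz, hdz⟩ := mem_thickening_iff.1 (h1 (hsub1 hx))
      exact le_trans (infDist_le_dist_of_mem hz) hdz.le
    · intro x hx
      simpa [infDist_zero_of_mem (hsub2 hx)] using hε.le
  · have hsub1 : w.cut γ ⊆ w.cut α := cut_mono hα.1 hle
    have hsub2 : w.cut β2 ⊆ w.cut γ := cut_mono hγ.1 (by linarith)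
    apply hausdorffDist_le_of_infDist hε.le
    · intro x hx
      simpa [infDist_zero_of_mem (hsub1 hx)] using hε.le
    · intro x hx
      obtain ⟨z, hz, hdz⟩ := mem_thickening_iff.1 (h2 hx)
      exact le_trans (infDist_le_dist_of_mem (hsub2 hz)) hdz.le

lemma hdist_cut_continuousWithinAt {v w : FuzzyNumber p} (hv : v.IsFuzzyNumber)
    (hw : w.IsFuzzyNumber) {α : ℝ} (hα : α ∈ Set.Ioo (0:ℝ) 1)
    (hregv : v.cut α ⊆ closure {x | α < v.u x})
    (hregw : w.cut α ⊆ closure {x | α < w.u x})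
    {S : Set ℝ} (hS : S ⊆ Set.Ioo (0:ℝ) 1) :
    ContinuousWithinAt (fun γ => hausdorffDist (v.cut γ) (w.cut γ)) S α := by
  rw [Metric.continuousWithinAt_iff]
  intro ε hε
  obtain ⟨η1, hη1, hc1⟩ := cut_hcont hv hα hregv (ε := ε/4) (by linarith)
  obtain ⟨η2, hη2, hc2⟩ := cut_hcont hw hα hregw (ε := ε/4) (by linarith)
  refine ⟨min η1 η2, lt_min hη1 hη2, fun γ hγS hγd => ?_⟩
  have hγ : γ ∈ Set.Ioo (0:ℝ) 1 := hS hγS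
  rw [Real.dist_eq] at hγd
  have e1 : hausdorffDist (v.cut γ) (v.cut α) ≤ ε/4 :=
    hc1 γ hγ (lt_of_lt_of_le hγd (min_le_left _ _))
  have e2 : hausdorffDist (w.cut γ) (w.cut α) ≤ ε/4 :=
    hc2 γ hγ (lt_of_lt_of_le hγd (min_le_right _ _))
  have hγI : γ ∈ Set.Icc (0:ℝ) 1 := ⟨hγ.1.le, hγ.2.le⟩
  have hαI : α ∈ Set.Icc (0:ℝ) 1 := ⟨hα.1.le, hα.2.le⟩
  have T1 : hausdorffDist (v.cut γ) (w.cut γ) ≤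
      hausdorffDist (v.cut γ) (v.cut α) + hausdorffDist (v.cut α) (w.cut α) +
        hausdorffDist (w.cut α) (w.cut γ) := by
    calc hausdorffDist (v.cut γ) (w.cut γ)
        ≤ hausdorffDist (v.cut γ) (v.cut α) + hausdorffDist (v.cut α) (w.cut γ) :=
          hausdorffDist_triangle (cut_edist_ne_top hv hv hγI hαI)
      _ ≤ hausdorffDist (v.cut γ) (v.cut α) +
          (hausdorffDist (v.cut α) (w.cut α) + hausdorffDist (w.cut α) (w.cut γ)) := by
          have := hausdorffDist_triangle (s := v.cut α) (t := w.cut α) (u := w.cut γ)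
            (cut_edist_ne_top hv hw hαI hαI)
          linarith
      _ = _ := by ring
  have T2 : hausdorffDist (v.cut α) (w.cut α) ≤
      hausdorffDist (v.cut α) (v.cut γ) + hausdorffDist (v.cut γ) (w.cut γ) +
        hausdorffDist (w.cut γ) (w.cut α) := by
    calc hausdorffDist (v.cut α) (w.cut α)
        ≤ hausdorffDist (v.cut α) (v.cut γ) + hausdorffDist (v.cut γ) (w.cut α) :=
          hausdorffDist_triangle (cut_edist_ne_top hv hv hαI hγI)
      _ ≤ hausdorffDist (v.cut α) (v.cut γ) +
          (hausdorffDist (v.cut γ) (w.cut γ) + hausdorffDist (w.cut γ) (w.cut α)) := by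
          have := hausdorffDist_triangle (s := v.cut γ) (t := w.cut γ) (u := w.cut α)
            (cut_edist_ne_top hv hw hγI hγI)
          linarith
      _ = _ := by ring
  rw [Real.dist_eq, abs_lt]
  have c1 : hausdorffDist (v.cut α) (v.cut γ) = hausdorffDist (v.cut γ) (v.cut α) :=
    hausdorffDist_comm
  have c2 : hausdorffDist (w.cut α) (w.cut γ) = hausdorffDist (w.cut γ) (w.cut α) :=
    hausdorffDist_comm
  rw [c1] at T2
  rw [c2] at T1
  constructor <;> linarith

set_option maxHeartbeats 1000000 in
lemma cut_hdist_le {v w : FuzzyNumber p} (hv : v.IsFuzzyNumber) (hw : w.IsFuzzyNumber)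
    {α : ℝ} (hα : α ∈ Set.Ioc (0:ℝ) 1) :
    hausdorffDist (v.cut α) (w.cut α) ≤ D v w + 1 + diam (w.cut 0) := by
  have hαI : α ∈ Set.Icc (0:ℝ) 1 := ⟨hα.1.le, hα.2⟩
  have hD0 : 0 ≤ D v w := hausdorffDist_nonneg
  have hdm : 0 ≤ diam (w.cut 0) := diam_nonneg
  have hbd := (cut_compact hw (Set.left_mem_Icc.2 zero_le_one)).isBounded
  have key : ∀ x ∈ v.cut α, ∃ y ∈ w.cut 0, dist x y ≤ D v w + 1 := by
    intro x hx
    have hux : α ≤ v.u x := (mem_cut_of_pos hα.1.ne').1 hx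
    have hz : pair x α ∈ v.send :=
      mem_send (cut_subset_cut_zero hα.1 hx) hαI hux
    obtain ⟨z', hz', hdz⟩ := send_approx hv hw (lt_of_le_of_lt (le_refl _)
      (by linarith : D v w < D v w + 1)) hz
    refine ⟨((WithLp.equiv 2 _) z').1, hz'.1, ?_⟩
    have := dist_fst_le (pair x α) z'
    rw [equiv_pair] at this
    exact le_trans this hdz.le
  obtain ⟨xw, hxw⟩ := cut_nonempty hw hαI
  obtain ⟨xv, hxv⟩ := cut_nonempty hv hαI
  apply hausdorffDist_le_of_infDist (by linarith)
  · intro x hx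
    obtain ⟨y, hy, hdy⟩ := key x hx
    calc infDist x (w.cut α) ≤ dist x xw := infDist_le_dist_of_mem hxw
      _ ≤ dist x y + dist y xw := dist_triangle _ _ _
      _ ≤ D v w + 1 + diam (w.cut 0) := by
          have h2 : dist y xw ≤ diam (w.cut 0) :=
            dist_le_diam_of_mem hbd hy (cut_subset_cut_zero hα.1 hxw)
          linarith
  · intro x hx
    obtain ⟨y, hy, hdy⟩ := key xv hxv
    calc infDist x (v.cut α) ≤ dist x xv := infDist_le_dist_of_mem hxv
      _ ≤ dist x y + dist y xv := dist_triangle _ _ _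
      _ ≤ D v w + 1 + diam (w.cut 0) := by
          have h2 : dist x y ≤ diam (w.cut 0) :=
            dist_le_diam_of_mem hbd (cut_subset_cut_zero hα.1 hx) hy
          rw [dist_comm xv y] at hdy
          linarith

lemma cut_tendsto {um : ℕ → FuzzyNumber p} {u : FuzzyNumber p}
    (hm : ∀ m, (um m).IsFuzzyNumber) (hu : u.IsFuzzyNumber)
    (h : Filter.Tendsto (fun m => D (um m) u) Filter.atTop (nhds 0)) {α : ℝ}
    (hα : α ∈ Set.Ioo (0:ℝ) 1) (hreg : u.cut α ⊆ closure {x | α < u.u x}) :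
    Filter.Tendsto (fun m => hausdorffDist ((um m).cut α) (u.cut α))
      Filter.atTop (nhds 0) := by
  rw [Metric.tendsto_atTop]
  intro ε hε
  obtain ⟨β1, hβ1, h1⟩ := exists_lower_cut hu ⟨hα.1, hα.2.le⟩ (by linarith : (0:ℝ) < ε/4)
  obtain ⟨β2, hβ2, h2⟩ := exists_upper_cut hu hα (by linarith : (0:ℝ) < ε/4) hreg
  set r := min (min (α - β1) (β2 - α)) (ε/4) with hrdef
  have hr : 0 < r :=
    lt_min (lt_min (by linarith [hβ1.2]) (by linarith [hβ2.1])) (by linarith)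
  obtain ⟨N, hN⟩ := Metric.tendsto_atTop.1 h r hr
  refine ⟨N, fun m hmN => ?_⟩
  have hD : D (um m) u < r := by
    have := hN m hmN
    rw [Real.dist_eq, sub_zero] at this
    exact (abs_lt.1 this).2
  have hr1 : r ≤ α - β1 := le_trans (min_le_left _ _) (min_le_left _ _)
  have hr2 : r ≤ β2 - α := le_trans (min_le_left _ _) (min_le_right _ _)
  have hr3 : r ≤ ε/4 := min_le_right _ _
  have hkey := hausdorff_cut_le (hm m) hu hα (by linarith : (0:ℝ) < ε)
    hβ1 h1 hβ2 h2 hr hr1 hr2 hr3 hD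
  rw [Real.dist_eq, sub_zero, abs_of_nonneg hausdorffDist_nonneg]
  linarith

end FuzzyNumber

open FuzzyNumber MeasureTheory

theorem D_tendsto_imp_dq_tendsto (p : ℕ) (um : ℕ → FuzzyNumber p)
    (u : FuzzyNumber p) (hm : ∀ m, (um m).IsFuzzyNumber) (hu : u.IsFuzzyNumber)
    (h : Filter.Tendsto (fun m => FuzzyNumber.D (um m) u) Filter.atTop (nhds 0)) :
    ∀ q : ℝ, 1 ≤ q →
      Filter.Tendsto (fun m => FuzzyNumber.dq q (um m) u) Filter.atTop (nhds 0) := by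
  intro q hq
  have hq0 : 0 < q := lt_of_lt_of_le one_pos hq
  have hg : Continuous (fun x : ℝ => x ^ q) := by
    rw [continuous_iff_continuousAt]
    intro x
    exact Real.continuousAt_rpow_const x q (Or.inr hq0.le)
  obtain ⟨M, hM⟩ : ∃ M, ∀ m, D (um m) u ≤ M := by
    obtain ⟨M, hM⟩ := h.bddAbove_range
    exact ⟨M, fun m => hM ⟨m, rfl⟩⟩
  set C := M + 1 + diam (u.cut 0) with hC
  have hC0 : 0 ≤ C := by
    have := hM 0
    have h2 : (0:ℝ) ≤ D (um 0) u := hausdorffDist_nonneg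
    have h3 : (0:ℝ) ≤ diam (u.cut 0) := diam_nonneg
    simp only [hC]; linarith
  set μ := (volume : Measure ℝ).restrict (Set.Ioc (0:ℝ) 1) with hμ
  set f : ℕ → ℝ → ℝ := fun m α => hausdorffDist ((um m).cut α) (u.cut α) ^ q with hf
  have hmeas : ∀ m, AEStronglyMeasurable (f m) μ := by
    intro m
    have hbadm := bad_countable (hm m)
    have hbadu := bad_countable hu
    set Bm := {α ∈ Set.Ioo (0:ℝ) 1 | ¬ (um m).cut α ⊆ closure {x | α < (um m).u x}} with hBm
    set Bu := {α ∈ Set.Ioo (0:ℝ) 1 | ¬ u.cut α ⊆ closure {x | α < u.u x}} with hBu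
    set S := Set.Ioo (0:ℝ) 1 \ (Bm ∪ Bu) with hS
    have hSmeas : MeasurableSet S :=
      measurableSet_Ioo.diff ((hbadm.union hbadu).measurableSet)
    have hcont : ContinuousOn (fun α => hausdorffDist ((um m).cut α) (u.cut α)) S := by
      intro α hαS
      have hαIoo : α ∈ Set.Ioo (0:ℝ) 1 := hαS.1
      have hregv : (um m).cut α ⊆ closure {x | α < (um m).u x} := by
        by_contra hcon
        exact hαS.2 (Or.inl ⟨hαIoo, hcon⟩)
      have hregw : u.cut α ⊆ closure {x | α < u.u x} := by
        by_contra hcon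
        exact hαS.2 (Or.inr ⟨hαIoo, hcon⟩)
      exact hdist_cut_continuousWithinAt (hm m) hu hαIoo hregv hregw
        (fun x hx => hx.1)
    have hae1 : AEMeasurable (fun α => hausdorffDist ((um m).cut α) (u.cut α))
        (volume.restrict S) := hcont.aemeasurable hSmeas
    have hS_eq : S =ᵐ[(volume : Measure ℝ)] Set.Ioc (0:ℝ) 1 := by
      rw [MeasureTheory.ae_eq_set]
      constructor
      · have : S \ Set.Ioc (0:ℝ) 1 = ∅ := by
          apply Set.eq_empty_of_forall_notMem
          rintro x ⟨⟨hx1, -⟩, hx2⟩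
          exact hx2 ⟨hx1.1, hx1.2.le⟩
        simp [this]
      · apply measure_mono_null (t := Bm ∪ Bu ∪ {(1:ℝ)})
        · rintro x ⟨hx1, hx2⟩
          by_cases hx3 : x ∈ Set.Ioo (0:ℝ) 1
          · rw [hS, Set.mem_diff] at hx2
            push_neg at hx2
            exact Or.inl (hx2 hx3)
          · right
            have : x = 1 := by
              rcases hx1 with ⟨ha, hb⟩
              rcases lt_or_eq_of_le hb with hlt | heq
              · exact absurd ⟨ha, hlt⟩ hx3
              · exact heq
            simp [this]
        · exact Set.Countable.measure_zero ((hbadm.union hbadu).union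
            (Set.countable_singleton 1)) _
    have hae2 : AEMeasurable (fun α => hausdorffDist ((um m).cut α) (u.cut α)) μ := by
      rw [hμ, ← Measure.restrict_congr_set hS_eq]
      exact hae1
    exact (hg.measurable.comp_aemeasurable hae2).aestronglyMeasurable
  have hbound : ∀ m, ∀ᵐ α ∂μ, ‖f m α‖ ≤ C ^ q := by
    intro m
    filter_upwards [MeasureTheory.ae_restrict_mem measurableSet_Ioc] with α hα
    have hle := cut_hdist_le (hm m) hu hα
    have hCle : hausdorffDist ((um m).cut α) (u.cut α) ≤ C := by
      have := hM m
      simp only [hC]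
      linarith
    rw [Real.norm_eq_abs, abs_of_nonneg (Real.rpow_nonneg hausdorffDist_nonneg q)]
    exact Real.rpow_le_rpow hausdorffDist_nonneg hCle hq0.le
  have hlim : ∀ᵐ α ∂μ, Filter.Tendsto (fun m => f m α) Filter.atTop (nhds 0) := by
    have hBu := bad_countable hu
    have hnull : μ ({α ∈ Set.Ioo (0:ℝ) 1 | ¬ u.cut α ⊆ closure {x | α < u.u x}}
        ∪ {(1:ℝ)}) = 0 := by
      apply le_antisymm _ zero_le
      calc μ _ ≤ volume ({α ∈ Set.Ioo (0:ℝ) 1 | ¬ u.cut α ⊆ closure {x | α < u.u x}}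
          ∪ {(1:ℝ)}) := Measure.restrict_le_self _
        _ = 0 := Set.Countable.measure_zero (hBu.union (Set.countable_singleton 1)) _
    have hae := (MeasureTheory.measure_eq_zero_iff_ae_notMem).1 hnull
    filter_upwards [MeasureTheory.ae_restrict_mem measurableSet_Ioc, hae] with α hα1 hα2
    have hα1' : α ≠ 1 := by
      intro hcon
      exact hα2 (Or.inr (by simp [hcon]))
    have hαIoo : α ∈ Set.Ioo (0:ℝ) 1 := ⟨hα1.1, lt_of_le_of_ne hα1.2 hα1'⟩
    have hreg : u.cut α ⊆ closure {x | α < u.u x} := by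
      by_contra hcon
      exact hα2 (Or.inl ⟨hαIoo, hcon⟩)
    have htend := cut_tendsto hm hu h hαIoo hreg
    have := (hg.continuousAt (x := 0)).tendsto.comp htend
    simpa [hf, Real.zero_rpow hq0.ne', Function.comp_def] using this
  have hint := MeasureTheory.tendsto_integral_of_dominated_convergence
    (fun _ => C ^ q) hmeas (MeasureTheory.integrable_const _) hbound hlim
  rw [MeasureTheory.integral_zero] at hint
  have hdq : ∀ m, dq q (um m) u = (∫ α, f m α ∂μ) ^ (1/q) := by
    intro m
    unfold FuzzyNumber.dq
    rw [intervalIntegral.integral_of_le zero_le_one]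
  have hcomp : Filter.Tendsto (fun y : ℝ => y ^ (1/q)) (nhds 0) (nhds 0) := by
    have := (Real.continuousAt_rpow_const 0 (1/q) (Or.inr (by positivity))).tendsto
    rwa [Real.zero_rpow (by positivity : (1:ℝ)/q ≠ 0)] at this
  have := hcomp.comp hint
  convert this using 1
  funext m
  exact hdq m
end
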